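/- Let f : ℝ² → ℝ be smooth, let a^f(x,y,p) = f_xx(x,y) + 2f_xy(x,y)p + f_yy(x,y)p², and let I(x,y,p) = (a^f)_x(x,y,p) + p·(a^f)_y(x,y,p). Let P = (x₀,y₀,p₀) be a point with a^f(P) = 0, (a^f)_p(P) = 0 (P lies on the criminant, so (x₀,y₀) is a parabolic point with asymptotic slope p₀), I(P) = 0 (so (x₀,y₀) is a godron), and ∇a^f(P) ≠ 0 (the function a^f has no critical point at P, which holds whenever the parabolic curve is smooth there). Then ∂I/∂p (P) ≠ 0. In particular the tangent direction at P of the π^∨-contour curve {a^f = 0, I = 0} is not vertical, so the curve of inflections (the flecnodal curve) cannot have a cusp at the godron (x₀,y₀). The key identity is ∂I/∂p = 3·(a^f)_y, valid at every point of ℝ³. -/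

import Mathlib

noncomputable section

/-- Partial derivative in the first variable of a function on `ℝ × ℝ`. -/
def pdx (f : ℝ × ℝ → ℝ) (q : ℝ × ℝ) : ℝ := deriv (fun t => f (t, q.2)) q.1

/-- Partial derivative in the second variable of a function on `ℝ × ℝ`. -/
def pdy (f : ℝ × ℝ → ℝ) (q : ℝ × ℝ) : ℝ := deriv (fun t => f (q.1, t)) q.2

/-- Partial derivative in `x` of a function on `ℝ × ℝ × ℝ` (coordinates `(x, y, p)`). -/
def pDx (F : ℝ × ℝ × ℝ → ℝ) (q : ℝ × ℝ × ℝ) : ℝ := deriv (fun t => F (t, q.2.1, q.2.2)) q.1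

/-- Partial derivative in `y` of a function on `ℝ × ℝ × ℝ` (coordinates `(x, y, p)`). -/
def pDy (F : ℝ × ℝ × ℝ → ℝ) (q : ℝ × ℝ × ℝ) : ℝ := deriv (fun t => F (q.1, t, q.2.2)) q.2.1

/-- Partial derivative in `p` of a function on `ℝ × ℝ × ℝ` (coordinates `(x, y, p)`). -/
def pDp (F : ℝ × ℝ × ℝ → ℝ) (q : ℝ × ℝ × ℝ) : ℝ := deriv (fun t => F (q.1, q.2.1, t)) q.2.2

/-- The asymptotic IDE function `a^f(x,y,p) = f_xx + 2 f_xy p + f_yy p²`. -/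
def aIDE (f : ℝ × ℝ → ℝ) (q : ℝ × ℝ × ℝ) : ℝ :=
  pdx (pdx f) (q.1, q.2.1) + 2 * pdy (pdx f) (q.1, q.2.1) * q.2.2
    + pdy (pdy f) (q.1, q.2.1) * q.2.2 ^ 2

/-- The inflection function `I^F(x,y,p) = F_x + p·F_y`; its zero set is the flec-surface. -/
def inflFun (F : ℝ × ℝ × ℝ → ℝ) (q : ℝ × ℝ × ℝ) : ℝ := pDx F q + q.2.2 * pDy F q

lemma hasDerivAt_slice_x {g : ℝ × ℝ → ℝ} (hg : Differentiable ℝ g) (x y : ℝ) :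
    HasDerivAt (fun t => g (t, y)) (fderiv ℝ g (x, y) (1, 0)) x :=
  (hg (x, y)).hasFDerivAt.comp_hasDerivAt x ((hasDerivAt_id x).prodMk (hasDerivAt_const x y))

lemma hasDerivAt_slice_y {g : ℝ × ℝ → ℝ} (hg : Differentiable ℝ g) (x y : ℝ) :
    HasDerivAt (fun t => g (x, t)) (fderiv ℝ g (x, y) (0, 1)) y :=
  (hg (x, y)).hasFDerivAt.comp_hasDerivAt y ((hasDerivAt_const y x).prodMk (hasDerivAt_id y))

lemma pdx_eq {g : ℝ × ℝ → ℝ} (hg : Differentiable ℝ g) (q : ℝ × ℝ) :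
    pdx g q = fderiv ℝ g q (1, 0) := by
  have := (hasDerivAt_slice_x hg q.1 q.2).deriv
  simpa [pdx] using this

lemma pdy_eq {g : ℝ × ℝ → ℝ} (hg : Differentiable ℝ g) (q : ℝ × ℝ) :
    pdy g q = fderiv ℝ g q (0, 1) := by
  have := (hasDerivAt_slice_y hg q.1 q.2).deriv
  simpa [pdy] using this

lemma contDiff_fderiv {g : ℝ × ℝ → ℝ} (hg : ContDiff ℝ (⊤ : ℕ∞) g) :
    ContDiff ℝ (⊤ : ℕ∞) (fderiv ℝ g) :=
  hg.fderiv_right (by simp)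

lemma contDiff_pdx {g : ℝ × ℝ → ℝ} (hg : ContDiff ℝ (⊤ : ℕ∞) g) :
    ContDiff ℝ (⊤ : ℕ∞) (pdx g) := by
  have h : pdx g = fun q => fderiv ℝ g q (1, 0) :=
    funext fun q => pdx_eq (hg.differentiable (by simp)) q
  rw [h]
  exact (contDiff_fderiv hg).clm_apply contDiff_const

lemma contDiff_pdy {g : ℝ × ℝ → ℝ} (hg : ContDiff ℝ (⊤ : ℕ∞) g) :
    ContDiff ℝ (⊤ : ℕ∞) (pdy g) := by
  have h : pdy g = fun q => fderiv ℝ g q (0, 1) :=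
    funext fun q => pdy_eq (hg.differentiable (by simp)) q
  rw [h]
  exact (contDiff_fderiv hg).clm_apply contDiff_const

lemma pdx_pdy_symm {g : ℝ × ℝ → ℝ} (hg : ContDiff ℝ (⊤ : ℕ∞) g) (q : ℝ × ℝ) :
    pdx (pdy g) q = pdy (pdx g) q := by
  have hdg := hg.differentiable (by simp)
  have h1 : ∀ z, HasFDerivAt g (fderiv ℝ g z) z := fun z => (hdg z).hasFDerivAt
  have hdf' : Differentiable ℝ (fderiv ℝ g) := (contDiff_fderiv hg).differentiable (by simp)
  have h2 : HasFDerivAt (fderiv ℝ g) (fderiv ℝ (fderiv ℝ g) q) q := (hdf' q).hasFDerivAt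
  have sym := second_derivative_symmetric h1 h2 (1, 0) (0, 1)
  -- pdx (pdy g) q
  have e1 : pdx (pdy g) q = fderiv ℝ (fderiv ℝ g) q (1, 0) (0, 1) := by
    have hc : HasDerivAt (fun t => fderiv ℝ g (t, q.2)) (fderiv ℝ (fderiv ℝ g) q (1, 0)) q.1 := by
      have := (hdf' (q.1, q.2)).hasFDerivAt.comp_hasDerivAt q.1
        ((hasDerivAt_id q.1).prodMk (hasDerivAt_const q.1 q.2))
      simpa [Function.comp_def] using this
    have := (hc.clm_apply (hasDerivAt_const q.1 ((0 : ℝ), (1 : ℝ)))).deriv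
    have hfun : (fun t => pdy g (t, q.2)) = fun t => fderiv ℝ g (t, q.2) (0, 1) :=
      funext fun t => pdy_eq hdg (t, q.2)
    simp only [pdx, hfun]
    simpa using this
  have e2 : pdy (pdx g) q = fderiv ℝ (fderiv ℝ g) q (0, 1) (1, 0) := by
    have hc : HasDerivAt (fun t => fderiv ℝ g (q.1, t)) (fderiv ℝ (fderiv ℝ g) q (0, 1)) q.2 := by
      have := (hdf' (q.1, q.2)).hasFDerivAt.comp_hasDerivAt q.2
        ((hasDerivAt_const q.2 q.1).prodMk (hasDerivAt_id q.2))
      simpa [Function.comp_def] using this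
    have := (hc.clm_apply (hasDerivAt_const q.2 ((1 : ℝ), (0 : ℝ)))).deriv
    have hfun : (fun t => pdx g (q.1, t)) = fun t => fderiv ℝ g (q.1, t) (1, 0) :=
      funext fun t => pdx_eq hdg (q.1, t)
    simp only [pdy, hfun]
    simpa using this
  rw [e1, e2, sym]

lemma hasDerivAt_slice_x' {g : ℝ × ℝ → ℝ} (hg : ContDiff ℝ (⊤ : ℕ∞) g) (x y : ℝ) :
    HasDerivAt (fun t => g (t, y)) (pdx g (x, y)) x := by
  rw [pdx_eq (hg.differentiable (by simp))]
  exact hasDerivAt_slice_x (hg.differentiable (by simp)) x y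

lemma hasDerivAt_slice_y' {g : ℝ × ℝ → ℝ} (hg : ContDiff ℝ (⊤ : ℕ∞) g) (x y : ℝ) :
    HasDerivAt (fun t => g (x, t)) (pdy g (x, y)) y := by
  rw [pdy_eq (hg.differentiable (by simp))]
  exact hasDerivAt_slice_y (hg.differentiable (by simp)) x y


variable {f : ℝ × ℝ → ℝ}


lemma aIDE_pDx (hf : ContDiff ℝ (⊤ : ℕ∞) f) (q : ℝ × ℝ × ℝ) :
    pDx (aIDE f) q = pdx (pdx (pdx f)) (q.1, q.2.1)
      + 2 * pdx (pdy (pdx f)) (q.1, q.2.1) * q.2.2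
      + pdx (pdy (pdy f)) (q.1, q.2.1) * q.2.2 ^ 2 := by
  have hA := hasDerivAt_slice_x' (contDiff_pdx (contDiff_pdx hf)) q.1 q.2.1
  have hB := hasDerivAt_slice_x' (contDiff_pdy (contDiff_pdx hf)) q.1 q.2.1
  have hC := hasDerivAt_slice_x' (contDiff_pdy (contDiff_pdy hf)) q.1 q.2.1
  have h : HasDerivAt (fun t => aIDE f (t, q.2.1, q.2.2))
      (pdx (pdx (pdx f)) (q.1, q.2.1) + 2 * pdx (pdy (pdx f)) (q.1, q.2.1) * q.2.2
        + pdx (pdy (pdy f)) (q.1, q.2.1) * q.2.2 ^ 2) q.1 := by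
    simpa [aIDE, mul_assoc, mul_comm, mul_left_comm] using
      ((hA.fun_add ((hB.const_mul 2).mul_const q.2.2)).fun_add (hC.mul_const (q.2.2 ^ 2)))
  exact h.deriv

lemma aIDE_pDy (hf : ContDiff ℝ (⊤ : ℕ∞) f) (q : ℝ × ℝ × ℝ) :
    pDy (aIDE f) q = pdy (pdx (pdx f)) (q.1, q.2.1)
      + 2 * pdy (pdy (pdx f)) (q.1, q.2.1) * q.2.2
      + pdy (pdy (pdy f)) (q.1, q.2.1) * q.2.2 ^ 2 := by
  have hA := hasDerivAt_slice_y' (contDiff_pdx (contDiff_pdx hf)) q.1 q.2.1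
  have hB := hasDerivAt_slice_y' (contDiff_pdy (contDiff_pdx hf)) q.1 q.2.1
  have hC := hasDerivAt_slice_y' (contDiff_pdy (contDiff_pdy hf)) q.1 q.2.1
  have h : HasDerivAt (fun t => aIDE f (q.1, t, q.2.2))
      (pdy (pdx (pdx f)) (q.1, q.2.1) + 2 * pdy (pdy (pdx f)) (q.1, q.2.1) * q.2.2
        + pdy (pdy (pdy f)) (q.1, q.2.1) * q.2.2 ^ 2) q.2.1 := by
    simpa [aIDE, mul_assoc, mul_comm, mul_left_comm] using
      ((hA.fun_add ((hB.const_mul 2).mul_const q.2.2)).fun_add (hC.mul_const (q.2.2 ^ 2)))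
  exact h.deriv

lemma aIDE_pDp (q : ℝ × ℝ × ℝ) :
    pDp (aIDE f) q = 2 * pdy (pdx f) (q.1, q.2.1)
      + 2 * pdy (pdy f) (q.1, q.2.1) * q.2.2 := by
  have h : HasDerivAt (fun t => aIDE f (q.1, q.2.1, t))
      (2 * pdy (pdx f) (q.1, q.2.1) + 2 * pdy (pdy f) (q.1, q.2.1) * q.2.2) q.2.2 := by
    have h1 : HasDerivAt (fun t : ℝ => pdx (pdx f) (q.1, q.2.1)
        + 2 * pdy (pdx f) (q.1, q.2.1) * t + pdy (pdy f) (q.1, q.2.1) * t ^ 2)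
        (0 + 2 * pdy (pdx f) (q.1, q.2.1) * 1
          + pdy (pdy f) (q.1, q.2.1) * (2 * q.2.2 ^ 1)) q.2.2 :=
      ((hasDerivAt_const _ _).add ((hasDerivAt_id q.2.2).const_mul _)).add
        ((hasDerivAt_pow 2 q.2.2).const_mul _)
    have h2 := h1
    simp only [aIDE]
    convert h2 using 2 <;> ring
  rw [pDp, h.deriv]

lemma inflFun_eq (hf : ContDiff ℝ (⊤ : ℕ∞) f) (q : ℝ × ℝ × ℝ) :
    inflFun (aIDE f) q =
      pdx (pdx (pdx f)) (q.1, q.2.1)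
        + (2 * pdx (pdy (pdx f)) (q.1, q.2.1) + pdy (pdx (pdx f)) (q.1, q.2.1)) * q.2.2
        + (pdx (pdy (pdy f)) (q.1, q.2.1) + 2 * pdy (pdy (pdx f)) (q.1, q.2.1)) * q.2.2 ^ 2
        + pdy (pdy (pdy f)) (q.1, q.2.1) * q.2.2 ^ 3 := by
  rw [inflFun, aIDE_pDx hf, aIDE_pDy hf]; ring

lemma inflFun_pDp (hf : ContDiff ℝ (⊤ : ℕ∞) f) (q : ℝ × ℝ × ℝ) :
    pDp (inflFun (aIDE f)) q =
      (2 * pdx (pdy (pdx f)) (q.1, q.2.1) + pdy (pdx (pdx f)) (q.1, q.2.1))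
        + 2 * (pdx (pdy (pdy f)) (q.1, q.2.1) + 2 * pdy (pdy (pdx f)) (q.1, q.2.1)) * q.2.2
        + 3 * pdy (pdy (pdy f)) (q.1, q.2.1) * q.2.2 ^ 2 := by
  set c0 := pdx (pdx (pdx f)) (q.1, q.2.1)
  set c1 := 2 * pdx (pdy (pdx f)) (q.1, q.2.1) + pdy (pdx (pdx f)) (q.1, q.2.1)
  set c2 := pdx (pdy (pdy f)) (q.1, q.2.1) + 2 * pdy (pdy (pdx f)) (q.1, q.2.1)
  set c3 := pdy (pdy (pdy f)) (q.1, q.2.1)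
  have hfun : (fun t => inflFun (aIDE f) (q.1, q.2.1, t))
      = fun t => c0 + c1 * t + c2 * t ^ 2 + c3 * t ^ 3 := by
    funext t
    exact inflFun_eq hf (q.1, q.2.1, t)
  have h : HasDerivAt (fun t : ℝ => c0 + c1 * t + c2 * t ^ 2 + c3 * t ^ 3)
      (c1 + 2 * c2 * q.2.2 + 3 * c3 * q.2.2 ^ 2) q.2.2 := by
    have := (((hasDerivAt_const q.2.2 c0).fun_add ((hasDerivAt_id q.2.2).const_mul c1)).fun_add
      ((hasDerivAt_pow 2 q.2.2).const_mul c2)).fun_add ((hasDerivAt_pow 3 q.2.2).const_mul c3)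
    refine this.congr_deriv ?_
    ring
  rw [pDp, hfun, h.deriv]

theorem key_identity (hf : ContDiff ℝ (⊤ : ℕ∞) f) (q : ℝ × ℝ × ℝ) :
    pDp (inflFun (aIDE f)) q = 3 * pDy (aIDE f) q := by
  rw [inflFun_pDp hf, aIDE_pDy hf]
  have h1 : pdx (pdy (pdx f)) (q.1, q.2.1) = pdy (pdx (pdx f)) (q.1, q.2.1) :=
    pdx_pdy_symm (contDiff_pdx hf) _
  have h2 : pdx (pdy (pdy f)) (q.1, q.2.1) = pdy (pdy (pdx f)) (q.1, q.2.1) := by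
    have := pdx_pdy_symm (contDiff_pdy hf) (q.1, q.2.1)
    rw [this]
    have hsym : pdx (pdy f) = pdy (pdx f) := funext fun z => pdx_pdy_symm hf z
    rw [hsym]
  rw [h1, h2]; ring


/-- No Cusp Theorem, analytic content: at a godron `P` (a point of the
criminant lying on the flec-surface) that is not a critical point of `a^f`, one has
`∂I/∂p (P) ≠ 0`, so the flecnodal curve cannot have a cusp at the godron.
The key identity is `∂I/∂p = 3 (a^f)_y` at every point. -/
theorem no_cusp_at_godron (f : ℝ × ℝ → ℝ) (hf : ContDiff ℝ (⊤ : ℕ∞) f)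
    (P : ℝ × ℝ × ℝ)
    (hP : aIDE f P = 0)
    (hPp : pDp (aIDE f) P = 0)
    (hPI : inflFun (aIDE f) P = 0)
    (hgrad : ¬ (pDx (aIDE f) P = 0 ∧ pDy (aIDE f) P = 0 ∧ pDp (aIDE f) P = 0)) :
    pDp (inflFun (aIDE f)) P ≠ 0 ∧
    ∀ q : ℝ × ℝ × ℝ, pDp (inflFun (aIDE f)) q = 3 * pDy (aIDE f) q := by
  refine ⟨?_, fun q => key_identity hf q⟩
  intro h0
  have hy : pDy (aIDE f) P = 0 := by
    have := key_identity hf P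
    rw [h0] at this
    linarith
  have hx : pDx (aIDE f) P = 0 := by
    have : pDx (aIDE f) P + P.2.2 * pDy (aIDE f) P = 0 := hPI
    rw [hy] at this
    linarith
  exact hgrad ⟨hx, hy, hPp⟩
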